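/- Let H₂ = [1 ⋯ 1; x^{i₁} ⋯ x^{i_{n_v}}] with N × N circulant permutation matrices and i₁ = 0. Then girth(H₂) > 8 if and only if all differences iⱼ − i_l (for j ≠ l, j, l ∈ [n_v]) are pairwise distinct modulo N. -/

import Mathlib

open Matrix

/-- The permutation matrix (over ℕ) associated with a permutation. -/
def permMatrix {N : ℕ} (σ : Equiv.Perm (Fin N)) : Matrix (Fin N) (Fin N) ℕ :=
  Matrix.of fun i j => if σ i = j then 1 else 0

/-- The Tanner graph of an ℕ-valued matrix: the bipartite simple graph on rows ⊕ columns
with an edge between row `i` and column `j` whenever `M i j ≠ 0`. -/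
def tanner {α β : Type*} (M : Matrix α β ℕ) : SimpleGraph (α ⊕ β) :=
  SimpleGraph.fromRel fun u v => ∃ i j, u = Sum.inl i ∧ v = Sum.inr j ∧ M i j ≠ 0

open Classical in
/-- The girth of the Tanner (multi)graph of an ℕ-valued matrix: an entry `≥ 2` is a
multiple edge, giving girth `2`; otherwise the girth of the Tanner simple graph
(`⊤` if there is no cycle). -/
noncomputable def matGirth {α β : Type*} (M : Matrix α β ℕ) : ℕ∞ :=
  if ∃ i j, 2 ≤ M i j then 2 else (tanner M).egirth


/-- The `N × N` circulant permutation matrix with shift `r` (mod `N`):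
entry `(i, j)` equals `1` iff `j ≡ i + r (mod N)`. -/
def circ (N : ℕ) (r : ZMod N) : Matrix (Fin N) (Fin N) ℕ :=
  Matrix.of fun i j => if ((j : ℕ) : ZMod N) = ((i : ℕ) : ZMod N) + r then 1 else 0

/-- The block matrix with first block row all identities and second block row the
circulant permutation matrices `circ N (e j)`. -/
def H2circ {N nv : ℕ} (e : Fin nv → ZMod N) :
    Matrix (Fin 2 × Fin N) (Fin nv × Fin N) ℕ :=
  Matrix.of fun p q =>
    if p.1 = 0 then (if p.2 = q.2 then 1 else 0) else circ N (e q.1) p.2 q.2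

section Aux

variable {α β : Type*} {Mm : Matrix α β ℕ}

lemma tanner_adj_inl_inr {p : α} {q : β} :
    (tanner Mm).Adj (Sum.inl p) (Sum.inr q) ↔ Mm p q ≠ 0 := by
  simp only [tanner, SimpleGraph.fromRel_adj]
  constructor
  · rintro ⟨hne, (⟨i,j,hi,hj,h⟩|⟨i,j,hi,hj,h⟩)⟩
    · cases hi; cases hj; exact h
    · exact absurd hi (by simp)
  · intro h
    exact ⟨by simp, Or.inl ⟨p, q, rfl, rfl, h⟩⟩

lemma adj_inl_shape {p : α} {u : α ⊕ β} (h : (tanner Mm).Adj (Sum.inl p) u) :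
    ∃ q, u = Sum.inr q ∧ Mm p q ≠ 0 := by
  simp only [tanner, SimpleGraph.fromRel_adj] at h
  obtain ⟨hne, (⟨i,j,hi,hj,h⟩|⟨i,j,hi,hj,h⟩)⟩ := h
  · cases hi; exact ⟨j, hj, h⟩
  · exact absurd hj (by simp)

lemma adj_inr_shape {q : β} {u : α ⊕ β} (h : (tanner Mm).Adj (Sum.inr q) u) :
    ∃ p, u = Sum.inl p ∧ Mm p q ≠ 0 := by
  simp only [tanner, SimpleGraph.fromRel_adj] at h
  obtain ⟨hne, (⟨i,j,hi,hj,h⟩|⟨i,j,hi,hj,h⟩)⟩ := h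
  · exact absurd hi (by simp)
  · cases hi; cases hj; exact ⟨i, rfl, h⟩

end Aux

section H2

variable {N nv : ℕ} {e : Fin nv → ZMod N}

lemma H2_ne {a : Fin 2} {x : Fin N} {j : Fin nv} {t : Fin N} :
    H2circ e (a, x) (j, t) ≠ 0 ↔
      (a = 0 ∧ x = t) ∨ (a = 1 ∧ ((t : ℕ) : ZMod N) = ((x : ℕ) : ZMod N) + e j) := by
  rcases (by omega : a = 0 ∨ a = 1) with rfl | rfl
  · simp [H2circ]
  · simp [H2circ, circ]

lemma castFin_inj {i i' : Fin N} (h : ((i : ℕ) : ZMod N) = ((i' : ℕ) : ZMod N)) : i = i' := by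
  have h1 := ZMod.val_natCast_of_lt i.isLt
  have h2 := ZMod.val_natCast_of_lt i'.isLt
  exact Fin.ext (by rw [← h1, ← h2, h])

lemma var_two_checks {a a' : Fin 2} {x x' : Fin N} {j : Fin nv} {t : Fin N}
    (h1 : H2circ e (a, x) (j, t) ≠ 0) (h2 : H2circ e (a', x') (j, t) ≠ 0)
    (hne : (a, x) ≠ (a', x')) : a ≠ a' := by
  rintro rfl
  rw [H2_ne] at h1 h2
  rcases h1 with ⟨rfl, rfl⟩ | ⟨rfl, h1⟩ <;> rcases h2 with ⟨h2a, rfl⟩ | ⟨h2a, h2⟩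
  · exact hne rfl
  · simp at h2a
  · simp at h2a
  · have : x = x' := castFin_inj (by
      have := h1.symm.trans h2
      exact add_right_cancel this)
    exact hne (by rw [this])

end H2

section Main

open SimpleGraph Walk Sum

variable {N nv : ℕ} {e : Fin nv → ZMod N}

lemma fin2 (a : Fin 2) : a = 0 ∨ a = 1 := by omega

lemma key8
    (cond : ∀ j l j' l' : Fin nv, j ≠ l → j' ≠ l' → e j - e l = e j' - e l' → j = j' ∧ l = l')
    {j l l' j' : Fin nv} {t1 t2 s1 s2 : ZMod N}
    (h1 : t1 = s1 + e j) (h2 : t2 = s1 + e l) (h3 : t2 = s2 + e l') (h4 : t1 = s2 + e j')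
    (ht : t1 ≠ t2) (hjj : j ≠ j') : False := by
  have hjl : j ≠ l := by rintro rfl; exact ht (h1.trans h2.symm)
  have hl' : j' ≠ l' := by rintro rfl; exact ht (h4.trans h3.symm)
  have hd : e j - e l = e j' - e l' := by
    linear_combination h2 - h1 + h4 - h3
  exact hjj (cond j l j' l' hjl hl' hd).1

lemma noShortAtCheck
    (cond : ∀ j l j' l' : Fin nv, j ≠ l → j' ≠ l' → e j - e l = e j' - e l' → j = j' ∧ l = l')
    (p0 : Fin 2 × Fin N)
    (w : (tanner (H2circ e)).Walk (Sum.inl p0) (Sum.inl p0)) (hw : w.IsCycle)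
    (hlen : w.length ≤ 8) : False := by
  obtain ⟨a0, x0⟩ := p0
  cases w with
  | nil => simpa using hw.three_le_length
  | cons h1 w =>
  obtain ⟨q1, rfl, E1⟩ := adj_inl_shape h1
  cases w with
  | cons h2 w =>
  obtain ⟨p2, rfl, E2⟩ := adj_inr_shape h2
  cases w with
  | nil => simpa using hw.three_le_length
  | cons h3 w =>
  obtain ⟨q3, rfl, E3⟩ := adj_inl_shape h3
  cases w with
  | cons h4 w =>
  obtain ⟨p4, rfl, E4⟩ := adj_inr_shape h4
  cases w with
  | nil =>
    obtain ⟨a2, x2⟩ := p2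
    obtain ⟨j, t1⟩ := q1
    obtain ⟨l, t3⟩ := q3
    have hnd := hw.2
    simp only [Walk.support_cons, Walk.support_nil, List.tail_cons, List.nodup_cons,
      List.mem_cons, List.mem_singleton, List.not_mem_nil, or_false, not_or,
      Sum.inr.injEq, Sum.inl.injEq, reduceCtorEq, not_false_eq_true, true_and, and_true,
      List.nodup_nil, Prod.mk.injEq, not_and] at hnd
    obtain ⟨hq, hp⟩ := hnd
    rw [H2_ne] at E1 E2 E3 E4
    rcases E1 with ⟨rfl, rfl⟩ | ⟨rfl, E1⟩
    · rcases E4 with ⟨-, rfl⟩ | ⟨h, -⟩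
      · have hj : j ≠ l := fun h => (hq h) rfl
        rcases fin2 a2 with rfl | rfl
        · rcases E2 with ⟨-, rfl⟩ | ⟨h, -⟩
          · exact (hp rfl) rfl
          · simp at h
        · rcases E2 with ⟨h, -⟩ | ⟨-, E2⟩
          · simp at h
          rcases E3 with ⟨h, -⟩ | ⟨-, E3⟩
          · simp at h
          have hel : e j = e l := by linear_combination E3 - E2
          exact hj (cond j l l j hj hj.symm (by rw [hel])).1
      · simp at h
    · rcases E4 with ⟨h, -⟩ | ⟨-, E4⟩
      · simp at h
      rcases fin2 a2 with rfl | rfl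
      · rcases E2 with ⟨-, rfl⟩ | ⟨h, -⟩
        · rcases E3 with ⟨-, rfl⟩ | ⟨h, -⟩
          · have hj : j ≠ l := fun h => (hq h) rfl
            have hel : e j = e l := by linear_combination E4 - E1
            exact hj (cond j l l j hj hj.symm (by rw [hel])).1
          · simp at h
        · simp at h
      · rcases E2 with ⟨h, -⟩ | ⟨-, E2⟩
        · simp at h
        have hx : x2 = x0 := castFin_inj (by linear_combination E1 - E2)
        exact (hp rfl) (by rw [hx])
  | cons h5 w =>
  obtain ⟨q5, rfl, E5⟩ := adj_inl_shape h5
  cases w with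
  | cons h6 w =>
  obtain ⟨p6, rfl, E6⟩ := adj_inr_shape h6
  cases w with
  | nil =>
    obtain ⟨a2, x2⟩ := p2
    obtain ⟨a4, x4⟩ := p4
    have hnd := hw.2
    simp only [Walk.support_cons, Walk.support_nil, List.tail_cons, List.nodup_cons,
      List.mem_cons, List.mem_singleton, List.not_mem_nil, or_false, not_or,
      Sum.inr.injEq, Sum.inl.injEq, reduceCtorEq, not_false_eq_true, true_and, and_true,
      List.nodup_nil, Prod.mk.injEq, not_and] at hnd
    obtain ⟨-, ⟨h24, h20⟩, -, h40⟩ := hnd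
    obtain ⟨j1, t1⟩ := q1
    obtain ⟨j3, t3⟩ := q3
    obtain ⟨j5, t5⟩ := q5
    have d02 : a0 ≠ a2 := var_two_checks E1 E2 (fun h => by
      injection h with h1 h2; exact h20 h1.symm h2.symm)
    have d24 : a2 ≠ a4 := var_two_checks E3 E4 (fun h => by
      injection h with h1 h2; exact h24 h1 h2)
    have d40 : a4 ≠ a0 := var_two_checks E5 E6 (fun h => by
      injection h with h1 h2; exact h40 h1 h2)
    rcases fin2 a0 with rfl | rfl <;> rcases fin2 a2 with rfl | rfl <;>
      rcases fin2 a4 with rfl | rfl <;> simp_all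
  | cons h7 w =>
  obtain ⟨q7, rfl, E7⟩ := adj_inl_shape h7
  cases w with
  | cons h8 w =>
  obtain ⟨p8, rfl, E8⟩ := adj_inr_shape h8
  cases w with
  | nil =>
    obtain ⟨a2, x2⟩ := p2
    obtain ⟨a4, x4⟩ := p4
    obtain ⟨a6, x6⟩ := p6
    have hnd := hw.2
    simp only [Walk.support_cons, Walk.support_nil, List.tail_cons, List.nodup_cons,
      List.mem_cons, List.mem_singleton, List.not_mem_nil, or_false, not_or,
      Sum.inr.injEq, Sum.inl.injEq, reduceCtorEq, not_false_eq_true, true_and, and_true,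
      List.nodup_nil, Prod.mk.injEq, not_and] at hnd
    obtain ⟨⟨hq13, -, hq17⟩, ⟨h24, h26, h20⟩, ⟨hq35, -⟩, ⟨h46, h40⟩, hq57, h60⟩ := hnd
    obtain ⟨j, t1⟩ := q1
    obtain ⟨l, t3⟩ := q3
    obtain ⟨l2, t5⟩ := q5
    obtain ⟨j2, t7⟩ := q7
    have d02 : a0 ≠ a2 := var_two_checks E1 E2 (fun h => by
      injection h with h1 h2; exact h20 h1.symm h2.symm)
    have d24 : a2 ≠ a4 := var_two_checks E3 E4 (fun h => by
      injection h with h1 h2; exact h24 h1 h2)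
    have d46 : a4 ≠ a6 := var_two_checks E5 E6 (fun h => by
      injection h with h1 h2; exact h46 h1 h2)
    have d60 : a6 ≠ a0 := var_two_checks E7 E8 (fun h => by
      injection h with h1 h2; exact h60 h1 h2)
    rw [H2_ne] at E1 E2 E3 E4 E5 E6 E7 E8
    rcases fin2 a0 with rfl | rfl
    · rcases fin2 a2 with rfl | rfl
      · exact absurd rfl d02
      rcases fin2 a4 with rfl | rfl
      swap
      · exact absurd rfl d24
      rcases fin2 a6 with rfl | rfl
      · exact absurd rfl d46
      rcases E1 with ⟨-, rfl⟩ | ⟨h, -⟩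
      swap; · simp at h
      rcases E2 with ⟨h, -⟩ | ⟨-, E2⟩
      · simp at h
      rcases E3 with ⟨h, -⟩ | ⟨-, E3⟩
      · simp at h
      rcases E4 with ⟨-, rfl⟩ | ⟨h, -⟩
      swap; · simp at h
      rcases E5 with ⟨-, rfl⟩ | ⟨h, -⟩
      swap; · simp at h
      rcases E6 with ⟨h, -⟩ | ⟨-, E6⟩
      · simp at h
      rcases E7 with ⟨h, -⟩ | ⟨-, E7⟩
      · simp at h
      rcases E8 with ⟨-, rfl⟩ | ⟨h, -⟩
      swap; · simp at h
      refine key8 cond E2 E3 E6 E7 (fun hc => h40 rfl (castFin_inj hc.symm)) (fun h => ?_)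
      exact hq17 (by rw [h])
    · rcases fin2 a2 with rfl | rfl
      swap
      · exact absurd rfl d02
      rcases fin2 a4 with rfl | rfl
      · exact absurd rfl d24
      rcases fin2 a6 with rfl | rfl
      swap
      · exact absurd rfl d46
      rcases E1 with ⟨h, -⟩ | ⟨-, E1⟩
      · simp at h
      rcases E2 with ⟨-, rfl⟩ | ⟨h, -⟩
      swap; · simp at h
      rcases E3 with ⟨-, rfl⟩ | ⟨h, -⟩
      swap; · simp at h
      rcases E4 with ⟨h, -⟩ | ⟨-, E4⟩
      · simp at h
      rcases E5 with ⟨h, -⟩ | ⟨-, E5⟩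
      · simp at h
      rcases E6 with ⟨-, rfl⟩ | ⟨h, -⟩
      swap; · simp at h
      rcases E7 with ⟨-, rfl⟩ | ⟨h, -⟩
      swap; · simp at h
      rcases E8 with ⟨h, -⟩ | ⟨-, E8⟩
      · simp at h
      refine key8 cond E1 E8 E5 E4 (fun hc => h26 rfl (castFin_inj hc)) (fun h => ?_)
      exact hq13 (by rw [h])
  | cons h9 w =>
    simp only [Walk.length_cons] at hlen
    omega



lemma length_rotate {V : Type*} [DecidableEq V] {G : SimpleGraph V} {u v : V} (c : G.Walk v v)
    (h : u ∈ c.support) : (c.rotate u h).length = c.length := by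
  simp only [Walk.rotate, Walk.length_append]
  have := congr_arg Walk.length (c.take_spec h)
  rw [Walk.length_append] at this
  omega

lemma egirth_le_of_cycle {V : Type*} {G : SimpleGraph V} {a : V} {w : G.Walk a a}
    (hw : w.IsCycle) : G.egirth ≤ w.length := by
  rw [SimpleGraph.egirth]
  exact iInf₂_le_of_le a w (iInf_le _ hw)

lemma adj_mk {a : Fin 2} {x : Fin N} {j : Fin nv} {t : Fin N}
    (h : H2circ e (a, x) (j, t) ≠ 0) :
    (tanner (H2circ e)).Adj (Sum.inl (a, x)) (Sum.inr (j, t)) :=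
  tanner_adj_inl_inr.mpr h

lemma fn_cast [NeZero N] (z : ZMod N) :
    (((⟨z.val, ZMod.val_lt z⟩ : Fin N) : ℕ) : ZMod N) = z := ZMod.natCast_rightInverse z

lemma short4 [NeZero N] {j l : Fin nv} (hjl : j ≠ l) (hel : e j = e l) :
    (tanner (H2circ e)).egirth ≤ 4 := by
  set s : Fin N := ⟨(0 : ZMod N).val, ZMod.val_lt _⟩ with hs
  set t : Fin N := ⟨(e j).val, ZMod.val_lt _⟩ with ht
  have cs : ((s : ℕ) : ZMod N) = 0 := fn_cast _
  have ct : ((t : ℕ) : ZMod N) = e j := fn_cast _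
  have A1 : (tanner (H2circ e)).Adj (Sum.inl (0, t)) (Sum.inr (j, t)) :=
    adj_mk (H2_ne.mpr (Or.inl ⟨rfl, rfl⟩))
  have A2 : (tanner (H2circ e)).Adj (Sum.inr (j, t)) (Sum.inl (1, s)) :=
    (adj_mk (H2_ne.mpr (Or.inr ⟨rfl, by rw [cs, ct, zero_add]⟩))).symm
  have A3 : (tanner (H2circ e)).Adj (Sum.inl (1, s)) (Sum.inr (l, t)) :=
    adj_mk (H2_ne.mpr (Or.inr ⟨rfl, by rw [cs, ct, zero_add, hel]⟩))
  have A4 : (tanner (H2circ e)).Adj (Sum.inr (l, t)) (Sum.inl (0, t)) :=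
    (adj_mk (H2_ne.mpr (Or.inl ⟨rfl, rfl⟩))).symm
  have hw : (Walk.cons A1 (Walk.cons A2 (Walk.cons A3 (Walk.cons A4 Walk.nil)))).IsCycle := by
    refine (Walk.isCycle_def _).mpr ⟨(Walk.isTrail_def _).mpr ?_, by simp, ?_⟩
    · simp [hjl, Prod.ext_iff]
    · simp [hjl, Prod.ext_iff]
  calc (tanner (H2circ e)).egirth ≤ _ := egirth_le_of_cycle hw
  _ ≤ 4 := by simp

lemma short8 [NeZero N] {j l j' l' : Fin nv} (hejl : e j ≠ e l) (hell' : e l ≠ e l')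
    (hjj' : j ≠ j') (hll' : l ≠ l') (hjl : j ≠ l) (hj'l' : j' ≠ l')
    (hd : e j - e l = e j' - e l') :
    (tanner (H2circ e)).egirth ≤ 8 := by
  set s1 : Fin N := ⟨(0 : ZMod N).val, ZMod.val_lt _⟩ with hs1
  set s2 : Fin N := ⟨(e l - e l').val, ZMod.val_lt _⟩ with hs2
  set t1 : Fin N := ⟨(e j).val, ZMod.val_lt _⟩ with ht1
  set t2 : Fin N := ⟨(e l).val, ZMod.val_lt _⟩ with ht2
  have cs1 : ((s1 : ℕ) : ZMod N) = 0 := fn_cast _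
  have cs2 : ((s2 : ℕ) : ZMod N) = e l - e l' := fn_cast _
  have ct1 : ((t1 : ℕ) : ZMod N) = e j := fn_cast _
  have ct2 : ((t2 : ℕ) : ZMod N) = e l := fn_cast _
  have htt : t1 ≠ t2 := by
    intro h
    exact hejl (by rw [← ct1, ← ct2, h])
  have hss : s1 ≠ s2 := by
    intro h
    apply hell'
    have : (0 : ZMod N) = e l - e l' := by rw [← cs1, ← cs2, h]
    linear_combination -this
  have A1 : (tanner (H2circ e)).Adj (Sum.inl (0, t1)) (Sum.inr (j, t1)) :=
    adj_mk (H2_ne.mpr (Or.inl ⟨rfl, rfl⟩))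
  have A2 : (tanner (H2circ e)).Adj (Sum.inr (j, t1)) (Sum.inl (1, s1)) :=
    (adj_mk (H2_ne.mpr (Or.inr ⟨rfl, by rw [cs1, ct1, zero_add]⟩))).symm
  have A3 : (tanner (H2circ e)).Adj (Sum.inl (1, s1)) (Sum.inr (l, t2)) :=
    adj_mk (H2_ne.mpr (Or.inr ⟨rfl, by rw [cs1, ct2, zero_add]⟩))
  have A4 : (tanner (H2circ e)).Adj (Sum.inr (l, t2)) (Sum.inl (0, t2)) :=
    (adj_mk (H2_ne.mpr (Or.inl ⟨rfl, rfl⟩))).symm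
  have A5 : (tanner (H2circ e)).Adj (Sum.inl (0, t2)) (Sum.inr (l', t2)) :=
    adj_mk (H2_ne.mpr (Or.inl ⟨rfl, rfl⟩))
  have A6 : (tanner (H2circ e)).Adj (Sum.inr (l', t2)) (Sum.inl (1, s2)) :=
    (adj_mk (H2_ne.mpr (Or.inr ⟨rfl, by rw [cs2, ct2]; ring⟩))).symm
  have A7 : (tanner (H2circ e)).Adj (Sum.inl (1, s2)) (Sum.inr (j', t1)) :=
    adj_mk (H2_ne.mpr (Or.inr ⟨rfl, by rw [cs2, ct1]; linear_combination hd⟩))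
  have A8 : (tanner (H2circ e)).Adj (Sum.inr (j', t1)) (Sum.inl (0, t1)) :=
    (adj_mk (H2_ne.mpr (Or.inl ⟨rfl, rfl⟩))).symm
  have hw : (Walk.cons A1 (Walk.cons A2 (Walk.cons A3 (Walk.cons A4 (Walk.cons A5
      (Walk.cons A6 (Walk.cons A7 (Walk.cons A8 Walk.nil)))))))).IsCycle := by
    refine (Walk.isCycle_def _).mpr ⟨(Walk.isTrail_def _).mpr ?_, by simp, ?_⟩
    · simp [hjj', hll', htt, hss, htt.symm, hss.symm, Prod.ext_iff]
    · simp [hjj', hll', htt, hss, htt.symm, hss.symm, Prod.ext_iff]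
  calc (tanner (H2circ e)).egirth ≤ _ := egirth_le_of_cycle hw
  _ ≤ 8 := by simp

end Main

theorem stmt10 {N nv : ℕ} (hN : 0 < N) [NeZero nv] (e : Fin nv → ZMod N) (h0 : e 0 = 0) :
    (8 : ℕ∞) < (tanner (H2circ e)).egirth ↔
      ∀ j l j' l' : Fin nv, j ≠ l → j' ≠ l' →
        e j - e l = e j' - e l' → j = j' ∧ l = l' := by
  haveI : NeZero N := ⟨hN.ne'⟩
  constructor
  · intro hg j l j' l' hjl hj'l' hd
    by_contra hne
    by_cases hex : ∃ a b : Fin nv, a ≠ b ∧ e a = e b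
    · obtain ⟨a, b, hab, hel⟩ := hex
      exact absurd hg (not_lt.mpr ((short4 hab hel).trans (by norm_num)))
    · push_neg at hex
      have inj : ∀ a b : Fin nv, e a = e b → a = b := fun a b h => by
        by_contra hab; exact hex a b hab h
      have hjj' : j ≠ j' := by
        rintro rfl
        exact hne ⟨rfl, inj _ _ (by linear_combination -hd)⟩
      have hll' : l ≠ l' := by
        rintro rfl
        exact hne ⟨inj _ _ (by linear_combination hd), rfl⟩
      exact absurd hg (not_lt.mpr (short8 (fun h => hjl (inj _ _ h))
        (fun h => hll' (inj _ _ h)) hjj' hll' hjl hj'l' hd))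
  · intro cond
    have h9 : (9 : ℕ∞) ≤ (tanner (H2circ e)).egirth := by
      rw [SimpleGraph.le_egirth]
      intro a w hw
      by_contra hlt
      push_neg at hlt
      have hlen : w.length ≤ 8 := by
        have : w.length < 9 := by exact_mod_cast hlt
        omega
      cases a with
      | inl p0 => exact (noShortAtCheck cond p0 w hw hlen).elim
      | inr q0 =>
        have h3 := hw.three_le_length
        have hadj := w.adj_getVert_succ (i := 0) (by omega)
        rw [SimpleGraph.Walk.getVert_zero] at hadj
        obtain ⟨p, hp, -⟩ := adj_inr_shape hadj
        have hmem : w.getVert 1 ∈ w.support :=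
          SimpleGraph.Walk.mem_support_iff_exists_getVert.mpr ⟨1, rfl, by omega⟩
        rw [hp] at hmem
        exact (noShortAtCheck cond p (w.rotate _ hmem) (hw.rotate hmem)
          (by rw [length_rotate]; exact hlen)).elim
    exact lt_of_lt_of_le (by norm_num) h9
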